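/- Let G be a finite group of order ℓ, let 2 ≤ q ≤ ℓ, let X be a free G-space and let Y be a Hausdorff topological space. The triple (X,G;Y) does NOT satisfy the q-th Borsuk-Ulam property if and only if there exists a continuous G-equivariant map X → Map_q(G,Y). -/
import Mathlib


/-- `Map_q(G,Y)`: functions `G → Y` that are non-constant on every `q`-element subset of `G`. -/
def MapQ (G Y : Type*) (q : ℕ) : Set (G → Y) :=
  {φ | ∀ S : Finset G, S.card = q → ¬∃ y : Y, ∀ g ∈ S, φ g = y}

theorem MapQ.smul_mem {G Y : Type*} [Group G] {q : ℕ} (g : G) {φ : G → Y}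
    (hφ : φ ∈ MapQ G Y q) : (fun h => φ (g⁻¹ * h)) ∈ MapQ G Y q := by
  classical
  rintro S hS ⟨y, hy⟩
  refine hφ (S.image (fun h => g⁻¹ * h)) ?_ ⟨y, ?_⟩
  · rwa [Finset.card_image_of_injective _ (mul_right_injective g⁻¹)]
  · rintro a ha
    obtain ⟨b, hb, rfl⟩ := Finset.mem_image.mp ha
    exact hy b hb

/-- The left `G`-action on `Map_q(G,Y)` given by `(g • φ) h = φ (g⁻¹ * h)`. -/
instance MapQ.instSMul {G Y : Type*} [Group G] {q : ℕ} : SMul G (MapQ G Y q) :=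
  ⟨fun g φ => ⟨fun h => (φ : G → Y) (g⁻¹ * h), MapQ.smul_mem g φ.2⟩⟩

instance MapQ.instMulAction {G Y : Type*} [Group G] {q : ℕ} :
    MulAction G (MapQ G Y q) where
  one_smul φ := Subtype.ext <| funext fun h => by
    show (φ : G → Y) ((1 : G)⁻¹ * h) = (φ : G → Y) h
    rw [inv_one, one_mul]
  mul_smul g k φ := Subtype.ext <| funext fun h => by
    show (φ : G → Y) ((g * k)⁻¹ * h) = (φ : G → Y) (k⁻¹ * (g⁻¹ * h))
    rw [mul_inv_rev, mul_assoc]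

/-- The sectional category of a map: the least `n` such that the base admits a cover by `n`
open sets, each admitting a continuous local section; `∞` if no such finite cover exists. -/
noncomputable def secat {E B : Type*} [TopologicalSpace E] [TopologicalSpace B]
    (p : E → B) : ℕ∞ :=
  ⨅ (n : ℕ) (_ : ∃ U : Fin n → Set B, (∀ i, IsOpen (U i)) ∧ (⋃ i, U i) = Set.univ ∧
      ∀ i, ∃ s : C(U i, E), ∀ b : U i, p (s b) = (b : B)), (n : ℕ∞)

/-- The triple `(X,G;Y)` satisfies the `q`-th Borsuk-Ulam property. -/
def BorsukUlam (G : Type*) [Group G] (X Y : Type*) [TopologicalSpace X] [TopologicalSpace Y]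
    [MulAction G X] (q : ℕ) : Prop :=
  ∀ f : C(X, Y), ∃ (x : X) (S : Finset G), S.card = q ∧ ∃ y : Y, ∀ g ∈ S, f (g • x) = y

/-- The `q`-th index of `(X,G)`: the least `k` such that there is a continuous `G`-equivariant
map `X → Map_q(G, ℝ^{k+1})`; `∞` if no such `k` exists. -/
noncomputable def indexQ (G : Type*) [Group G] (X : Type*) [TopologicalSpace X]
    [MulAction G X] (q : ℕ) : ℕ∞ :=
  ⨅ (k : ℕ) (_ : ∃ Φ : C(X, MapQ G (Fin (k + 1) → ℝ) q),
      ∀ (g : G) (x : X), Φ (g • x) = g • Φ x), (k : ℕ∞)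

/-- The triple `(X,G;Y)` does not satisfy the `q`-th Borsuk-Ulam property iff
there exists a continuous `G`-equivariant map `X → Map_q(G,Y)`. -/
theorem statement_0 {G : Type*} [Group G] [Fintype G] {X Y : Type*}
    [TopologicalSpace X] [TopologicalSpace Y] [T2Space Y]
    [MulAction G X] [ContinuousConstSMul G X]
    (hfree : ∀ (g : G) (x : X), g • x = x → g = 1)
    {q : ℕ} (hq2 : 2 ≤ q) (hql : q ≤ Fintype.card G) :
    ¬ BorsukUlam G X Y q ↔
      ∃ Φ : C(X, MapQ G Y q), ∀ (g : G) (x : X), Φ (g • x) = g • Φ x := by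
  classical
  constructor
  · intro hBU
    unfold BorsukUlam at hBU
    push_neg at hBU
    obtain ⟨f, hf⟩ := hBU
    have mem : ∀ x : X, (fun h : G => f (h⁻¹ • x)) ∈ MapQ G Y q := by
      rintro x S hS ⟨y, hy⟩
      obtain ⟨g, hg, hgy⟩ := hf x (S.image (·⁻¹))
        (by rw [Finset.card_image_of_injective _ inv_injective, hS]) y
      obtain ⟨h, hh, rfl⟩ := Finset.mem_image.mp hg
      exact hgy (hy h hh)
    refine ⟨⟨fun x => ⟨fun h => f (h⁻¹ • x), mem x⟩, ?_⟩, ?_⟩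
    · refine Continuous.subtype_mk (continuous_pi fun h => ?_) _
      exact f.continuous.comp (continuous_const_smul h⁻¹)
    · intro g x
      refine Subtype.ext (funext fun h => ?_)
      show f (h⁻¹ • g • x) = f ((g⁻¹ * h)⁻¹ • x)
      rw [mul_inv_rev, inv_inv, smul_smul]
  · rintro ⟨Φ, hΦ⟩ hBU
    obtain ⟨x, S, hS, y, hy⟩ := hBU
      ⟨fun x => (Φ x : G → Y) 1,
        (continuous_apply (1 : G)).comp (continuous_subtype_val.comp Φ.continuous)⟩
    refine (Φ x).2 (S.image (·⁻¹))
      (by rw [Finset.card_image_of_injective _ inv_injective, hS]) ⟨y, ?_⟩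
    rintro g hg
    obtain ⟨h, hh, rfl⟩ := Finset.mem_image.mp hg
    have h1 := hy h hh
    simp only [ContinuousMap.coe_mk] at h1
    rw [hΦ h x] at h1
    show (Φ x : G → Y) h⁻¹ = y
    rw [← mul_one h⁻¹]
    exact h1
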